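/- The fuse and add operations preserve embeddings of twig queries: for every twig query q and trees t and t', if there exists an embedding of q in t and t ⊴ t', then there exists an embedding of q in t'. -/

import Mathlib

set_option autoImplicit false

universe u v w

/-- An unordered word over an alphabet `σ`: a multiset over `σ`,
viewed as a function giving the number of occurrences of each symbol. -/
def UWord (σ : Type u) : Type u := σ → ℕ

/-- The empty unordered word `ε`. -/
def UWord.zero {σ : Type u} : UWord σ := fun _ => 0

/-- Unordered concatenation (multiset union) of two unordered words. -/
def UWord.add {σ : Type u} (w₁ w₂ : UWord σ) : UWord σ := fun a => w₁ a + w₂ a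

/-- The unordered word consisting of a single occurrence of `a`. -/
def UWord.single {σ : Type u} [DecidableEq σ] (a : σ) : UWord σ :=
  fun b => if b = a then 1 else 0

/-- Unordered concatenation of a list of unordered words. -/
def listSum {σ : Type u} (l : List (UWord σ)) : UWord σ := l.foldr UWord.add UWord.zero

/-- An unordered tree: a finite set of nodes, a root, a labeling with symbols of `σ`,
and an acyclic parent–child relation in which every non-root node has exactly one
parent. -/
structure UTree (σ : Type u) (ν : Type v) : Type (max u v) where
  nodes : Finset ν
  root : ν
  root_mem : root ∈ nodes
  lab : ν → σ
  child : ν → ν → Prop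
  child_mem : ∀ {m n : ν}, child m n → m ∈ nodes ∧ n ∈ nodes
  parent_unique : ∀ n ∈ nodes, n ≠ root → ∃! m : ν, child m n
  acyclic : ∀ n : ν, ¬ Relation.TransGen child n n

/-- The unordered word of (labels of) children of a node of a tree. -/
noncomputable def UTree.childWord {σ : Type u} {ν : Type v} (t : UTree σ ν) (n : ν) :
    UWord σ :=
  fun a => {m : ν | t.child n m ∧ t.lab m = a}.ncard

/-- A twig query: a tree with labels in `σ ∪ {⋆}` (`none` is the wildcard `⋆`) and two
disjoint edge relations, child edges and descendant edges. -/
structure Twig (σ : Type u) (ν : Type v) : Type (max u v) where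
  nodes : Finset ν
  root : ν
  root_mem : root ∈ nodes
  lab : ν → Option σ
  child : ν → ν → Prop
  desc : ν → ν → Prop
  child_mem : ∀ {m n : ν}, child m n → m ∈ nodes ∧ n ∈ nodes
  desc_mem : ∀ {m n : ν}, desc m n → m ∈ nodes ∧ n ∈ nodes
  edges_disjoint : ∀ m n : ν, ¬(child m n ∧ desc m n)
  parent_unique : ∀ n ∈ nodes, n ≠ root → ∃! m : ν, (child m n ∨ desc m n)
  acyclic : ∀ n : ν, ¬ Relation.TransGen (fun x y => child x y ∨ desc x y) n n

/-- `q.Sat t`, written `t ⊨ q`: there exists an embedding of the twig query `q`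
in the tree `t`. -/
def Twig.Sat {σ : Type u} {ν : Type v} {μ : Type w} (q : Twig σ ν) (t : UTree σ μ) :
    Prop :=
  ∃ f : ν → μ,
    f q.root = t.root ∧
    (∀ n ∈ q.nodes, f n ∈ t.nodes) ∧
    (∀ m n : ν, q.child m n → t.child (f m) (f n)) ∧
    (∀ m n : ν, q.desc m n → Relation.TransGen t.child (f m) (f n)) ∧
    (∀ n ∈ q.nodes, q.lab n = none ∨ q.lab n = some (t.lab (f n)))

/-- Embedding of a tree `s` in a tree `t` (viewing `s` as a twig query with only
child edges and no wildcards). -/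
def UTree.EmbedsIn {σ : Type u} {ν : Type v} {μ : Type w} (s : UTree σ ν)
    (t : UTree σ μ) : Prop :=
  ∃ f : ν → μ,
    f s.root = t.root ∧
    (∀ n ∈ s.nodes, f n ∈ t.nodes) ∧
    (∀ m n : ν, s.child m n → t.child (f m) (f n)) ∧
    (∀ n ∈ s.nodes, s.lab n = t.lab (f n))

/-- The fuse operation: `t'` is obtained from `t` by fusing two sibling nodes `n₁, n₂`
carrying the same label into a single node (`n₁`), whose children are all the children
of the two fused nodes. -/
def FuseStep {σ : Type u} {ν : Type v} [DecidableEq ν] (t t' : UTree σ ν) : Prop :=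
  ∃ p n₁ n₂ : ν, n₁ ∈ t.nodes ∧ n₂ ∈ t.nodes ∧ n₁ ≠ n₂ ∧
    t.child p n₁ ∧ t.child p n₂ ∧ t.lab n₁ = t.lab n₂ ∧
    t'.nodes = t.nodes.erase n₂ ∧
    t'.root = t.root ∧
    (∀ n ∈ t'.nodes, t'.lab n = t.lab n) ∧
    (∀ m n : ν, t'.child m n ↔
        (m ≠ n₂ ∧ n ≠ n₂ ∧ (t.child m n ∨ (m = n₁ ∧ t.child n₂ n))))

/-- The add operation: `t'` is obtained from `t` by attaching a new subtree
(rooted at a fresh node `r'`) as an additional child subtree of a node `n₀` of `t`. -/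
def AddStep {σ : Type u} {ν : Type v} (t t' : UTree σ ν) : Prop :=
  ∃ n₀ r' : ν, n₀ ∈ t.nodes ∧ r' ∉ t.nodes ∧ r' ∈ t'.nodes ∧
    t'.root = t.root ∧
    t.nodes ⊆ t'.nodes ∧
    (∀ n ∈ t.nodes, t'.lab n = t.lab n) ∧
    t'.child n₀ r' ∧
    (∀ m n : ν, m ∈ t.nodes → n ∈ t.nodes → (t'.child m n ↔ t.child m n)) ∧
    (∀ m n : ν, t'.child m n → n ∈ t.nodes → m ∈ t.nodes) ∧
    (∀ m n : ν, t'.child m n → m ∈ t.nodes → n ∉ t.nodes → (m = n₀ ∧ n = r'))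

/-- `t ⊴ t'`: the reflexive–transitive closure of single fuse and add steps. -/
def TreeLE {σ : Type u} {ν : Type v} [DecidableEq ν] : UTree σ ν → UTree σ ν → Prop :=
  Relation.ReflTransGen (fun t t' => FuseStep t t' ∨ AddStep t t')


lemma sat_fuse {σ : Type} {ν μ : Type} [DecidableEq ν]
    (q : Twig σ μ) (t t' : UTree σ ν) (hf : FuseStep t t') (hs : q.Sat t) :
    q.Sat t' := by
  obtain ⟨p, n₁, n₂, h1, h2, h12, hpc1, hpc2, hlab, hnodes, hroot, hlabs, hchild⟩ := hf
  obtain ⟨f, hr, hn, hc, hd, hl⟩ := hs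
  have hroot2 : t.root ≠ n₂ := by
    intro h
    have := t'.root_mem
    rw [hnodes, hroot, h] at this
    exact (Finset.notMem_erase _ _) this
  set g : ν → ν := fun x => if x = n₂ then n₁ else x with hg
  have hgne : ∀ x, g x ≠ n₂ := by
    intro x
    by_cases hx : x = n₂
    · simpa [hg, hx] using h12
    · simp [hg, hx]
  have hgmem : ∀ x, x ∈ t.nodes → g x ∈ t'.nodes := by
    intro x hx
    rw [hnodes, Finset.mem_erase]
    refine ⟨hgne x, ?_⟩
    by_cases hx2 : x = n₂ <;> simp [hg, hx2, h1, hx]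
  have hlift : ∀ a b, t.child a b → t'.child (g a) (g b) := by
    intro a b hab
    rw [hchild]
    refine ⟨hgne a, hgne b, ?_⟩
    by_cases ha : a = n₂
    · by_cases hb : b = n₂
      · exfalso
        rw [ha, hb] at hab
        exact t.acyclic n₂ (Relation.TransGen.single hab)
      · right
        refine ⟨by simp [hg, ha], ?_⟩
        show t.child n₂ (if b = n₂ then n₁ else b)
        rw [if_neg hb, ← ha]
        exact hab
    · by_cases hb : b = n₂
      · left
        have hbmem : b ∈ t.nodes := (t.child_mem hab).2
        have hbr : b ≠ t.root := by rw [hb]; exact fun h => hroot2 h.symm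
        obtain ⟨m, _, hmu⟩ := t.parent_unique b hbmem hbr
        have hap : a = p := by
          rw [hmu a hab, hmu p (by rw [hb]; exact hpc2)]
        show t.child (if a = n₂ then n₁ else a) (if b = n₂ then n₁ else b)
        rw [if_neg ha, if_pos hb, hap]
        exact hpc1
      · left
        show t.child (if a = n₂ then n₁ else a) (if b = n₂ then n₁ else b)
        rw [if_neg ha, if_neg hb]
        exact hab
  refine ⟨g ∘ f, ?_, ?_, ?_, ?_, ?_⟩
  · show g (f q.root) = t'.root
    rw [hr, hroot]
    exact if_neg hroot2
  · intro n hn'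
    exact hgmem _ (hn n hn')
  · intro m n hmn
    exact hlift _ _ (hc m n hmn)
  · intro m n hmn
    exact Relation.TransGen.lift g hlift _ _ (hd m n hmn)
  · intro n hn'
    rcases hl n hn' with h | h
    · left; exact h
    · right
      rw [h]
      congr 1
      have hmem : g (f n) ∈ t'.nodes := hgmem _ (hn n hn')
      rw [show (g ∘ f) n = g (f n) from rfl, hlabs _ hmem]
      by_cases hfn : f n = n₂
      · show t.lab (f n) = t.lab (if f n = n₂ then n₁ else f n)
        rw [if_pos hfn, hfn, hlab]
      · show t.lab (f n) = t.lab (if f n = n₂ then n₁ else f n)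
        rw [if_neg hfn]

lemma sat_add {σ : Type} {ν μ : Type}
    (q : Twig σ μ) (t t' : UTree σ ν) (ha : AddStep t t') (hs : q.Sat t) :
    q.Sat t' := by
  obtain ⟨n₀, r', hn₀, hr', hr'2, hroot, hsub, hlabs, hcr, hciff, hback, hnew⟩ := ha
  obtain ⟨f, hr, hn, hc, hd, hl⟩ := hs
  have hlift : ∀ a b, a ∈ t.nodes → t.child a b → t'.child a b := by
    intro a b ha1 hab
    exact (hciff a b ha1 (t.child_mem hab).2).mpr hab
  have htg : ∀ a b : ν, a ∈ t.nodes → Relation.TransGen t.child a b →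
      Relation.TransGen t'.child a b := by
    intro a b ha1 h
    induction h with
    | single h => exact Relation.TransGen.single (hlift _ _ ha1 h)
    | tail h1 h2 ih =>
      rename_i x y
      have hb : x ∈ t.nodes := by
        cases h1 with
        | single h => exact (t.child_mem h).2
        | tail _ h => exact (t.child_mem h).2
      exact ih.tail (hlift _ _ hb h2)
  refine ⟨f, ?_, ?_, ?_, ?_, ?_⟩
  · rw [hr, hroot]
  · intro n hn'; exact hsub (hn n hn')
  · intro m n hmn
    exact hlift _ _ (hn m (q.child_mem hmn).1) (hc m n hmn)
  · intro m n hmn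
    exact htg _ _ (hn m (q.desc_mem hmn).1) (hd m n hmn)
  · intro n hn'
    rcases hl n hn' with h | h
    · left; exact h
    · right; rw [h, hlabs _ (hn n hn')]

/-- The fuse and add operations preserve embeddings of twig queries:
for every twig query `q` and trees `t` and `t'`, if there exists an embedding of `q`
in `t` and `t ⊴ t'`, then there exists an embedding of `q` in `t'`. -/
theorem statement16 {σ : Type} [Fintype σ] {ν μ : Type} [DecidableEq ν]
    (q : Twig σ μ) (t t' : UTree σ ν)
    (h1 : q.Sat t) (h2 : TreeLE t t') : q.Sat t' := by
  induction h2 with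
  | refl => exact h1
  | tail _ step ih =>
    rcases step with h | h
    · exact sat_fuse q _ _ h ih
    · exact sat_add q _ _ h ih
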